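/- For every finite tree T with n ≥ 2 vertices, there exists a function g : V(T) → {1, 2, …, 2n} such that the residues (g(u) + g(v)) mod 2n, over all n − 1 edges uv of T, are pairwise distinct and each of these residues is an odd number. -/
import Mathlib


/-- For every finite tree `T` on `n ≥ 2` vertices there is a function
`g : V(T) → {1,…,2n}` such that the residues `(g u + g v) mod 2n`, over the edges,
are pairwise distinct and each residue is odd. -/
theorem tree_odd_distinct_edge_residues {V : Type*} [Fintype V]
    (G : SimpleGraph V) (hT : G.IsTree) (h2 : 2 ≤ Fintype.card V) :
    ∃ g : V → ℕ,
      (∀ v : V, 1 ≤ g v ∧ g v ≤ 2 * Fintype.card V) ∧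
      (∀ u v u' v' : V, G.Adj u v → G.Adj u' v' →
        (g u + g v) % (2 * Fintype.card V) = (g u' + g v') % (2 * Fintype.card V) →
          s(u, v) = s(u', v')) ∧
      (∀ u v : V, G.Adj u v → Odd ((g u + g v) % (2 * Fintype.card V))) := by
  classical
  set n := Fintype.card V with hn
  haveI : NeZero (2 * n) := ⟨by omega⟩
  have hne : Nonempty V := Fintype.card_pos_iff.mp (by omega)
  obtain ⟨r⟩ := hne
  have hconn := hT.isConnected
  have huniq : ∀ ⦃a b : V⦄ (p q : G.Path a b), p = q :=
    SimpleGraph.isAcyclic_iff_path_unique.mp hT.IsAcyclic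
  -- choose a path from each vertex to the root
  let P : ∀ v : V, G.Path v r := fun v => ((hconn.preconnected v r).some).toPath
  have hP : ∀ (v : V) (w : G.Walk v r), w.IsPath → w = (P v).1 := by
    intro v w hw
    exact congrArg Subtype.val (huniq ⟨w, hw⟩ (P v))
  let p : V → V := fun v => (P v).1.getVert 1
  let depth : V → ℕ := fun v => (P v).1.length
  have hPr : (P r).1 = SimpleGraph.Walk.nil := (hP r SimpleGraph.Walk.nil (by simp)).symm
  -- the parent step
  have hstep : ∀ v : V, v ≠ r → G.Adj v (p v) ∧ depth (p v) + 1 = depth v := by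
    intro v hv
    have hnil : ¬ (P v).1.Nil := SimpleGraph.Walk.not_nil_of_ne hv
    obtain ⟨u, hadj, q, hq⟩ := SimpleGraph.Walk.not_nil_iff.mp hnil
    have hqp : q.IsPath := by
      have := (P v).2
      rw [hq] at this
      exact this.of_cons
    have hq' : q = (P u).1 := hP u q hqp
    have hpv : p v = u := by
      show (P v).1.getVert 1 = u
      rw [hq, SimpleGraph.Walk.getVert_cons_succ]
      simp [SimpleGraph.Walk.getVert_zero]
    constructor
    · rw [hpv]; exact hadj
    · show (P (p v)).1.length + 1 = (P v).1.length
      rw [hpv, ← hq', hq]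
      simp [SimpleGraph.Walk.length_cons]
  -- every edge is a parent edge
  have hedge : ∀ u v : V, G.Adj u v → (p v = u ∧ v ≠ r) ∨ (p u = v ∧ u ≠ r) := by
    intro u v huv
    by_cases hmem : v ∈ (P u).1.support
    · right
      have hur : u ≠ r := by
        intro h
        subst h
        rw [hPr] at hmem
        simp at hmem
        exact huv.ne (hmem ▸ rfl)
      refine ⟨?_, hur⟩
      -- takeUntil is a path from u to v, hence the single edge
      have htu : ((P u).1.takeUntil v hmem).IsPath := (P u).2.takeUntil hmem
      have hsingle : (SimpleGraph.Walk.cons huv SimpleGraph.Walk.nil : G.Walk u v).IsPath := by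
        simp [huv.ne]
      have heq : (P u).1.takeUntil v hmem = SimpleGraph.Walk.cons huv SimpleGraph.Walk.nil := by
        exact congrArg Subtype.val (huniq ⟨_, htu⟩ ⟨_, hsingle⟩)
      have hspec := SimpleGraph.Walk.take_spec (P u).1 hmem
      rw [heq] at hspec
      show (P u).1.getVert 1 = v
      rw [← hspec]
      simp [SimpleGraph.Walk.getVert_cons_succ]
    · left
      have hcons : (SimpleGraph.Walk.cons huv.symm (P u).1).IsPath :=
        ((P u).2.cons hmem)
      have heq : SimpleGraph.Walk.cons huv.symm (P u).1 = (P v).1 :=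
        hP v _ hcons
      have hvr : v ≠ r := fun h => hmem (h ▸ SimpleGraph.Walk.end_mem_support (P u).1)
      refine ⟨?_, hvr⟩
      show (P v).1.getVert 1 = u
      rw [← heq]
      simp [SimpleGraph.Walk.getVert_cons_succ]
  -- labels
  let ι : V ≃ Fin n := (Fintype.equivFin V)
  let T : V → ℕ := fun v => 2 * (ι v : ℕ) + 1
  have hTlt : ∀ v, T v < 2 * n := by
    intro v
    have := (ι v).2
    show 2 * (ι v : ℕ) + 1 < 2 * n
    omega
  let tz : V → ZMod (2 * n) := fun v => (T v : ZMod (2 * n))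
  -- recursive labeling
  let f : ℕ → V → ZMod (2 * n) := fun k =>
    Nat.rec (fun _ => 0) (fun _ fk v => tz v - fk (p v)) k
  let h : V → ZMod (2 * n) := fun v => f (depth v) v
  have hrec : ∀ v : V, v ≠ r → h v = tz v - h (p v) := by
    intro v hv
    obtain ⟨-, hd⟩ := hstep v hv
    show f (depth v) v = tz v - f (depth (p v)) (p v)
    rw [← hd]
  -- edge sums
  have hsum : ∀ u v : V, G.Adj u v → ∃ c : V, (s(u,v) = s(c, p c)) ∧ h u + h v = tz c := by
    intro u v huv
    rcases hedge u v huv with ⟨hpv, hvr⟩ | ⟨hpu, hur⟩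
    · refine ⟨v, ?_, ?_⟩
      · rw [hpv, Sym2.eq_swap]
      · rw [hrec v hvr, hpv]; ring
    · refine ⟨u, ?_, ?_⟩
      · rw [hpu]
      · rw [hrec u hur, hpu]; ring
  -- final function
  let g : V → ℕ := fun v => if (h v).val = 0 then 2 * n else (h v).val
  have hg : ∀ v, (g v : ZMod (2 * n)) = h v := by
    intro v
    show ((if (h v).val = 0 then 2 * n else (h v).val : ℕ) : ZMod (2 * n)) = h v
    split_ifs with h0
    · rw [ZMod.natCast_self, eq_comm, ← ZMod.val_eq_zero]
      exact h0
    · rw [ZMod.natCast_val, ZMod.cast_id]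
  have hgsum : ∀ u v : V, G.Adj u v → ∃ c : V, s(u,v) = s(c, p c) ∧
      (g u + g v) % (2 * n) = T c := by
    intro u v huv
    obtain ⟨c, hc1, hc2⟩ := hsum u v huv
    refine ⟨c, hc1, ?_⟩
    have : ((g u + g v : ℕ) : ZMod (2 * n)) = tz c := by
      push_cast
      rw [hg, hg, hc2]
    have hval := congrArg ZMod.val this
    rwa [ZMod.val_natCast, ZMod.val_natCast, Nat.mod_eq_of_lt (hTlt c)] at hval
  refine ⟨g, ?_, ?_, ?_⟩
  · intro v
    constructor
    · show 1 ≤ if (h v).val = 0 then 2 * n else (h v).val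
      split_ifs with h0
      · omega
      · omega
    · show (if (h v).val = 0 then 2 * n else (h v).val) ≤ 2 * n
      split_ifs with h0
      · exact le_refl _
      · exact le_of_lt ((h v).val_lt)
  · intro u v u' v' huv huv' hmod
    obtain ⟨c, hc1, hc2⟩ := hgsum u v huv
    obtain ⟨c', hc1', hc2'⟩ := hgsum u' v' huv'
    rw [hn] at hmod
    rw [hc2, hc2'] at hmod
    have : ι c = ι c' := by
      have : 2 * (ι c : ℕ) + 1 = 2 * (ι c' : ℕ) + 1 := hmod
      exact Fin.ext (by omega)
    have hcc : c = c' := ι.injective this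
    rw [hc1, hc1', hcc]
  · intro u v huv
    obtain ⟨c, -, hc2⟩ := hgsum u v huv
    rw [hn, hc2]
    have hTc : T c = 2 * (ι c : ℕ) + 1 := rfl
    exact ⟨(ι c : ℕ), by rw [hTc]⟩
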